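/- The chain-supported distribution λ_x constructed by the greedy procedure (repeatedly assigning mass min{min_{x_j<0}(-x_j/α), min_{x_j>0} x_j} to the sign vector u of the current residual x and subtracting) terminates in at most n+1 steps with a chain u₁ ≻ u₂ ≻ … ≻ u_{k-1} ≻ 0 of strictly decreasing elements of Dⁿ. -/

import Mathlib

open Finset

/-- The three-element domain `D = {-α, 0, 1}`, abstractly. -/
inductive D3 : Type
  | neg : D3
  | zero : D3
  | one : D3
deriving DecidableEq

instance : Fintype D3 :=
  ⟨{D3.neg, D3.zero, D3.one}, by rintro (_ | _ | _) <;> simp⟩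

namespace D3

/-- The embedding of `D3` into `ℝ` sending `neg ↦ -α`, `zero ↦ 0`, `one ↦ 1`. -/
def emb (α : ℝ) : D3 → ℝ
  | neg => -α
  | zero => 0
  | one => 1

/-- The partial order `0 ≺ 1`, `0 ≺ -α`, with `1` and `-α` incomparable. -/
instance : PartialOrder D3 where
  le x y := x = y ∨ x = zero
  le_refl x := Or.inl rfl
  le_trans x y z hxy hyz := by
    rcases hxy with rfl | rfl
    · exact hyz
    · exact Or.inr rfl
  le_antisymm x y hxy hyx := by
    rcases hxy with rfl | rfl
    · rfl
    · rcases hyx with rfl | rfl <;> rfl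

/-- `∧₀` : `1 ∧₀ (-α) = (-α) ∧₀ 1 = 0`, and min w.r.t. `≺` otherwise. -/
def meet0 (x y : D3) : D3 := if x = y then x else zero

/-- `∨₀` : `1 ∨₀ (-α) = (-α) ∨₀ 1 = 0`, and max w.r.t. `≺` otherwise. -/
def join0 (x y : D3) : D3 :=
  if x = y then x else if x = zero then y else if y = zero then x else zero

/-- `∨₁` : `1 ∨₁ (-α) = (-α) ∨₁ 1 = 1`, and max w.r.t. `≺` otherwise. -/
def join1 (x y : D3) : D3 :=
  if x = y then x else if x = zero then y else if y = zero then x else one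

end D3

/-- Componentwise `∧₀` on `Dⁿ`. -/
def vmeet0 {n : ℕ} (a b : Fin n → D3) : Fin n → D3 := fun i => D3.meet0 (a i) (b i)

/-- Componentwise `∨₀` on `Dⁿ`. -/
def vjoin0 {n : ℕ} (a b : Fin n → D3) : Fin n → D3 := fun i => D3.join0 (a i) (b i)

/-- Componentwise `∨₁` on `Dⁿ`. -/
def vjoin1 {n : ℕ} (a b : Fin n → D3) : Fin n → D3 := fun i => D3.join1 (a i) (b i)

/-- `lam` is a probability distribution on `Dⁿ`. -/
def IsDist (n : ℕ) (lam : (Fin n → D3) → ℝ) : Prop :=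
  (∀ a, 0 ≤ lam a ∧ lam a ≤ 1) ∧ ∑ a : Fin n → D3, lam a = 1

/-- `lam` has marginal vector `x`, i.e. `Σ_a lam(a)·a = x` in `ℝⁿ`. -/
def HasMarginal (α : ℝ) (n : ℕ) (lam : (Fin n → D3) → ℝ) (x : Fin n → ℝ) : Prop :=
  ∀ i, ∑ a : Fin n → D3, lam a * D3.emb α (a i) = x i

/-- The support of `lam` forms a chain w.r.t. the componentwise order on `Dⁿ`. -/
def ChainSupp (n : ℕ) (lam : (Fin n → D3) → ℝ) : Prop :=
  ∀ a b : Fin n → D3, lam a ≠ 0 → lam b ≠ 0 → a ≤ b ∨ b ≤ a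

/-- The box `[-α,1]ⁿ`. -/
def Box (α : ℝ) (n : ℕ) : Set (Fin n → ℝ) := {x | ∀ i, x i ∈ Set.Icc (-α) 1}

/-- `f : Dⁿ → ℝ` is α-bisubmodular. -/
def AlphaBisub (α : ℝ) (n : ℕ) (f : (Fin n → D3) → ℝ) : Prop :=
  ∀ a b : Fin n → D3,
    f (vmeet0 a b) + α * f (vjoin0 a b) + (1 - α) * f (vjoin1 a b) ≤ f a + f b

/-- Number of zero coordinates. -/
def zc {n : ℕ} (c : Fin n → D3) : ℕ := (Finset.univ.filter fun i => c i = D3.zero).card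

/-- The convex closure `f⁻(x)`. -/
noncomputable def cClos (α : ℝ) (n : ℕ) (f : (Fin n → D3) → ℝ) (x : Fin n → ℝ) : ℝ :=
  sInf {y | ∃ lam, IsDist n lam ∧ HasMarginal α n lam x ∧ y = ∑ a : Fin n → D3, lam a * f a}
/-- the greedy construction yields a strictly decreasing chain of
sign vectors and terminates in at most `n+1` steps (0-based: `u n = 0`). -/
theorem stmt17 (α : ℝ) (hα : α ∈ Set.Ioc (0 : ℝ) 1) (n : ℕ) (x : Fin n → ℝ)
    (hx : x ∈ Box α n)
    (u : ℕ → Fin n → D3) (xs : ℕ → Fin n → ℝ) (lam : ℕ → ℝ)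
    (hxs0 : xs 0 = x)
    (hu : ∀ i j, (xs i j < 0 → u i j = D3.neg) ∧ (xs i j = 0 → u i j = D3.zero) ∧
      (0 < xs i j → u i j = D3.one))
    (hlam : ∀ i, u i ≠ (fun _ => D3.zero) →
      lam i = sInf {r : ℝ | ∃ j, (xs i j < 0 ∧ r = -(xs i j) / α) ∨ (0 < xs i j ∧ r = xs i j)})
    (hrec : ∀ i, xs (i + 1) = fun j => xs i j - lam i * D3.emb α (u i j)) :
    (∀ i, u i ≠ (fun _ => D3.zero) → u (i + 1) < u i) ∧ u n = fun _ => D3.zero := by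
  obtain ⟨hα0, hα1⟩ := hα
  have hzero : ∀ i j, u i j = D3.zero ↔ xs i j = 0 := by
    intro i j
    obtain ⟨h1, h2, h3⟩ := hu i j
    constructor
    · intro h
      rcases lt_trichotomy (xs i j) 0 with hc | hc | hc
      · rw [h1 hc] at h; exact absurd h (by simp)
      · exact hc
      · rw [h3 hc] at h; exact absurd h (by simp)
    · exact h2
  have le_zero : ∀ a : D3, a ≤ D3.zero → a = D3.zero := by
    intro a ha
    rcases ha with h | h <;> exact h
  have key : ∀ i, u i ≠ (fun _ => D3.zero) →
      (u (i+1) ≤ u i ∧ ∃ j, u (i+1) j = D3.zero ∧ u i j ≠ D3.zero) := by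
    intro i hi
    set S : Set ℝ := {r : ℝ | ∃ j, (xs i j < 0 ∧ r = -(xs i j) / α) ∨ (0 < xs i j ∧ r = xs i j)}
      with hS
    have hlami : lam i = sInf S := hlam i hi
    have hSfin : S.Finite := by
      apply Set.Finite.subset ((Set.finite_range (fun j => -(xs i j)/α)).union
        (Set.finite_range (fun j => xs i j)))
      rintro r ⟨j, ⟨_, rfl⟩ | ⟨_, rfl⟩⟩
      · exact Or.inl ⟨j, rfl⟩
      · exact Or.inr ⟨j, rfl⟩
    have hSne : S.Nonempty := by
      have hj : ∃ j, xs i j ≠ 0 := by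
        by_contra h
        push_neg at h
        exact hi (funext fun j => (hzero i j).mpr (h j))
      obtain ⟨j, hj⟩ := hj
      rcases hj.lt_or_gt with h | h
      · exact ⟨_, j, Or.inl ⟨h, rfl⟩⟩
      · exact ⟨_, j, Or.inr ⟨h, rfl⟩⟩
    have hpos : ∀ r ∈ S, 0 < r := by
      rintro r ⟨j, ⟨h, rfl⟩ | ⟨h, rfl⟩⟩
      · exact div_pos (neg_pos.mpr h) hα0
      · exact h
    have hmem : lam i ∈ S := by rw [hlami]; exact hSne.csInf_mem hSfin
    have hlam_pos : 0 < lam i := hpos _ hmem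
    have hlam_le : ∀ r ∈ S, lam i ≤ r := fun r hr => hlami ▸ csInf_le hSfin.bddBelow hr
    have hxrec : ∀ j, xs (i+1) j = xs i j - lam i * D3.emb α (u i j) :=
      fun j => congrFun (hrec i) j
    have h1 := fun j => (hu i j).1
    have h2 := fun j => (hu i j).2.1
    have h3 := fun j => (hu i j).2.2
    constructor
    · intro j
      rcases lt_trichotomy (xs i j) 0 with hc | hc | hc
      · -- negative case: xs (i+1) j ≤ 0
        have hne : xs (i+1) j ≤ 0 := by
          rw [hxrec j, h1 j hc]
          have : lam i ≤ -(xs i j) / α := hlam_le _ ⟨j, Or.inl ⟨hc, rfl⟩⟩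
          have h' : lam i * α ≤ -(xs i j) := by
            calc lam i * α ≤ (-(xs i j) / α) * α := by nlinarith
            _ = -(xs i j) := by field_simp
          simp only [D3.emb]
          nlinarith
        rw [h1 j hc]
        rcases hne.lt_or_eq with h | h
        · rw [(hu (i+1) j).1 h]
        · rw [(hu (i+1) j).2.1 h]; exact Or.inr rfl
      · -- zero case
        have : xs (i+1) j = 0 := by
          rw [hxrec j, h2 j hc, hc]; simp [D3.emb]
        rw [(hu (i+1) j).2.1 this]; exact Or.inr rfl
      · -- positive case: xs (i+1) j ≥ 0
        have hne : 0 ≤ xs (i+1) j := by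
          rw [hxrec j, h3 j hc]
          have : lam i ≤ xs i j := hlam_le _ ⟨j, Or.inr ⟨hc, rfl⟩⟩
          simp only [D3.emb]
          nlinarith
        rw [h3 j hc]
        rcases hne.lt_or_eq with h | h
        · rw [(hu (i+1) j).2.2 h]
        · rw [(hu (i+1) j).2.1 h.symm]; exact Or.inr rfl
    · -- strictness: the infimum is attained at some j₀
      obtain ⟨j₀, hj₀⟩ := hmem
      rcases hj₀ with ⟨hc, hl⟩ | ⟨hc, hl⟩
      · refine ⟨j₀, ?_, ?_⟩
        · apply (hu (i+1) j₀).2.1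
          rw [hxrec j₀, h1 j₀ hc, hl]
          simp only [D3.emb]
          field_simp
          ring
        · rw [h1 j₀ hc]; simp
      · refine ⟨j₀, ?_, ?_⟩
        · apply (hu (i+1) j₀).2.1
          rw [hxrec j₀, h3 j₀ hc, hl]
          simp only [D3.emb]
          ring
        · rw [h3 j₀ hc]; simp
  have hstrict : ∀ i, u i ≠ (fun _ => D3.zero) → u (i + 1) < u i := by
    intro i hi
    obtain ⟨hle, j₀, hj1, hj2⟩ := key i hi
    refine lt_of_le_of_ne hle ?_
    intro h
    rw [h] at hj1
    exact hj2 hj1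
  refine ⟨hstrict, ?_⟩
  have step0 : ∀ i, u i = (fun _ => D3.zero) → u (i+1) = (fun _ => D3.zero) := by
    intro i hi
    funext j
    apply (hzero _ j).mpr
    have h1 : xs i j = 0 := (hzero i j).mp (congrFun hi j)
    have h2 := congrFun (hrec i) j
    rw [h2, h1, congrFun hi j]
    simp [D3.emb]
  have hcard : ∀ i, u i ≠ (fun _ => D3.zero) →
      (filter (fun j => u i j = D3.zero) univ).card <
      (filter (fun j => u (i+1) j = D3.zero) univ).card := by
    intro i hi
    obtain ⟨hle, j₀, hj1, hj2⟩ := key i hi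
    apply Finset.card_lt_card
    rw [Finset.ssubset_iff_of_subset]
    · exact ⟨j₀, by simpa using hj1, by simpa using hj2⟩
    · intro j hj
      simp only [mem_filter, mem_univ, true_and] at hj ⊢
      have := hle j
      rw [hj] at this
      rcases this with h | h <;> exact h
  have main : ∀ i, u i = (fun _ => D3.zero) ∨
      i ≤ (filter (fun j => u i j = D3.zero) univ).card := by
    intro i
    induction i with
    | zero => exact Or.inr (Nat.zero_le _)
    | succ k ih =>
      rcases ih with h | h
      · exact Or.inl (step0 k h)
      · by_cases hk : u k = (fun _ => D3.zero)
        · exact Or.inl (step0 k hk)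
        · exact Or.inr (le_trans (Nat.succ_le_of_lt (lt_of_le_of_lt h (hcard k hk))) le_rfl)
  rcases main n with h | h
  · exact h
  · have hle : (filter (fun j => u n j = D3.zero) univ).card ≤ n := by
      simpa using Finset.card_filter_le univ (fun j => u n j = D3.zero)
    have heq : (filter (fun j => u n j = D3.zero) univ).card = Fintype.card (Fin n) := by
      simp only [Fintype.card_fin]
      omega
    have huniv := Finset.eq_univ_of_card _ heq
    funext j
    have hj := Finset.eq_univ_iff_forall.mp huniv j
    simpa using hj
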